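/- The minimal contingency logic K^Δ (= R^Δ plus ΔN) is strongly complete with respect to the class of filters: every K^Δ-consistent set of formulas is satisfiable at some state of some neighborhood model whose neighborhood function at every state is closed under supersets, closed under binary intersections, and contains the unit S. Likewise, EMN^Δ (= M^Δ plus ΔN) is strongly complete with respect to the class of (mn)-frames. -/

import Mathlib

/-- The language L(Δ) of contingency logic: φ ::= p | ¬φ | (φ ∧ φ) | Δφ. -/
inductive Formula (P : Type) : Type
  | atom : P → Formula P
  | neg : Formula P → Formula P
  | and : Formula P → Formula P → Formula P
  | delta : Formula P → Formula P

namespace Formula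

variable {P : Type}

/-- φ ∨ ψ abbreviates ¬(¬φ ∧ ¬ψ). -/
def or (φ ψ : Formula P) : Formula P := neg (and (neg φ) (neg ψ))

/-- φ → ψ abbreviates ¬(φ ∧ ¬ψ). -/
def imp (φ ψ : Formula P) : Formula P := neg (and φ (neg ψ))

/-- φ ↔ ψ abbreviates (φ → ψ) ∧ (ψ → φ). -/
def iffF (φ ψ : Formula P) : Formula P := and (imp φ ψ) (imp ψ φ)

end Formula

/-- ⊤ : a fixed tautology (p ∨ ¬p for a fixed propositional variable p). -/
noncomputable def Formula.top (P : Type) [Nonempty P] : Formula P :=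
  Formula.or (Formula.atom (Classical.arbitrary P))
    (Formula.neg (Formula.atom (Classical.arbitrary P)))

/-- A neighborhood model ⟨S, N, V⟩: a nonempty set of states `S`, a neighborhood
function `N : S → P(P(S))` and a valuation `V`. -/
structure NbhdModel (P : Type) where
  S : Type
  nonempty : Nonempty S
  N : S → Set (Set S)
  V : P → Set S

/-- The truth set ⟦φ⟧ of a formula in a neighborhood model; the clause for `Δφ` says
that a state `s` satisfies `Δφ` iff ⟦φ⟧ ∈ N(s) or S ∖ ⟦φ⟧ ∈ N(s). -/
def NbhdModel.truthSet {P : Type} (M : NbhdModel P) : Formula P → Set M.S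
  | .atom p => M.V p
  | .neg φ => (M.truthSet φ)ᶜ
  | .and φ ψ => M.truthSet φ ∩ M.truthSet ψ
  | .delta φ => {s | M.truthSet φ ∈ M.N s ∨ (M.truthSet φ)ᶜ ∈ M.N s}

/-- Satisfaction: M,s ⊨ φ. -/
def NbhdModel.sat {P : Type} (M : NbhdModel P) (s : M.S) (φ : Formula P) : Prop :=
  s ∈ M.truthSet φ

/-- Frame property (m): closure under supersets. -/
def SupersetClosed {S : Type} (N : S → Set (Set S)) : Prop :=
  ∀ s : S, ∀ X Y : Set S, X ∈ N s → X ⊆ Y → Y ∈ N s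

/-- Frame property (c): closure under binary intersections. -/
def InterClosed {S : Type} (N : S → Set (Set S)) : Prop :=
  ∀ s : S, ∀ X Y : Set S, X ∈ N s → Y ∈ N s → X ∩ Y ∈ N s

/-- Frame property (n): contains the unit. -/
def ContainsUnit {S : Type} (N : S → Set (Set S)) : Prop :=
  ∀ s : S, (Set.univ : Set S) ∈ N s

/-- Frame property (z): closure under complements. -/
def ComplClosed {S : Type} (N : S → Set (Set S)) : Prop :=
  ∀ s : S, ∀ X : Set S, X ∈ N s → Xᶜ ∈ N s

/-- The supplementation of a neighborhood function:
`N⁺(s) = {X ⊆ S : Y ⊆ X for some Y ∈ N(s)}`. -/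
def suppN {S : Type} (N : S → Set (Set S)) (s : S) : Set (Set S) :=
  {X | ∃ Y ∈ N s, Y ⊆ X}

/-- `φ` is a substitution instance of a propositional tautology: every Boolean valuation
of formulas that respects `¬` and `∧` (treating atoms and Δ-formulas as atomic) makes
`φ` true. -/
def Tautology {P : Type} (φ : Formula P) : Prop :=
  ∀ v : Formula P → Bool,
    (∀ ψ, v (Formula.neg ψ) = !(v ψ)) →
    (∀ ψ χ, v (Formula.and ψ χ) = (v ψ && v χ)) →
    v φ = true

/-- Derivability in the system E^Δ (TAUT + ΔEqu + MP + REΔ) extended with the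
additional axioms in `Ax`. -/
inductive Deriv {P : Type} (Ax : Set (Formula P)) : Formula P → Prop
  | ax {φ} (h : φ ∈ Ax) : Deriv Ax φ
  | taut {φ} (h : Tautology φ) : Deriv Ax φ
  | equ (φ) : Deriv Ax (Formula.iffF (Formula.delta φ) (Formula.delta (Formula.neg φ)))
  | mp {φ ψ} (h1 : Deriv Ax (Formula.imp φ ψ)) (h2 : Deriv Ax φ) : Deriv Ax ψ
  | re {φ ψ} (h : Deriv Ax (Formula.iffF φ ψ)) :
      Deriv Ax (Formula.iffF (Formula.delta φ) (Formula.delta ψ))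

/-- Derivability of `φ` from the set of premises `Γ` in the system E^Δ + `Ax`. -/
inductive DerivFrom {P : Type} (Ax Γ : Set (Formula P)) : Formula P → Prop
  | mem {φ} (h : φ ∈ Γ) : DerivFrom Ax Γ φ
  | thm {φ} (h : Deriv Ax φ) : DerivFrom Ax Γ φ
  | mp {φ ψ} (h1 : DerivFrom Ax Γ (Formula.imp φ ψ)) (h2 : DerivFrom Ax Γ φ) :
      DerivFrom Ax Γ ψ

/-- `Γ` is consistent in the system E^Δ + `Ax`: no contradiction is derivable from `Γ`. -/
def Consistent {P : Type} (Ax Γ : Set (Formula P)) : Prop :=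
  ¬ ∃ φ : Formula P, DerivFrom Ax Γ φ ∧ DerivFrom Ax Γ (Formula.neg φ)

/-- The axiom ΔM: all instances of Δφ → Δ(φ ∨ ψ) ∨ Δ(¬φ ∨ χ). -/
def AxDeltaM {P : Type} : Set (Formula P) :=
  {f | ∃ φ ψ χ : Formula P,
     f = Formula.imp (Formula.delta φ)
           (Formula.or (Formula.delta (Formula.or φ ψ))
                       (Formula.delta (Formula.or (Formula.neg φ) χ)))}

/-- The axiom ΔC: all instances of (Δφ ∧ Δψ) → Δ(φ ∧ ψ). -/
def AxDeltaC {P : Type} : Set (Formula P) :=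
  {f | ∃ φ ψ : Formula P,
     f = Formula.imp (Formula.and (Formula.delta φ) (Formula.delta ψ))
           (Formula.delta (Formula.and φ ψ))}

/-- The axiom ΔN: Δ⊤. -/
noncomputable def AxDeltaN (P : Type) [Nonempty P] : Set (Formula P) :=
  {Formula.delta (Formula.top P)}

namespace CLProof

open Formula

variable {P : Type}

/-! ### Tautology instances -/

lemma tautK (a b : Formula P) : Tautology (imp a (imp b a)) := by
  intro v hn ha; simp only [imp, hn, ha]; cases v a <;> cases v b <;> rfl

lemma tautS (a b c : Formula P) :
    Tautology (imp (imp a (imp b c)) (imp (imp a b) (imp a c))) := by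
  intro v hn ha; simp only [imp, hn, ha]; cases v a <;> cases v b <;> cases v c <;> rfl

lemma tautId (a : Formula P) : Tautology (imp a a) := by
  intro v hn ha; simp only [imp, hn, ha]; cases v a <;> rfl

lemma tautAndElim1 (a b : Formula P) : Tautology (imp (Formula.and a b) a) := by
  intro v hn ha; simp only [imp, hn, ha]; cases v a <;> cases v b <;> rfl

lemma tautAndElim2 (a b : Formula P) : Tautology (imp (Formula.and a b) b) := by
  intro v hn ha; simp only [imp, hn, ha]; cases v a <;> cases v b <;> rfl

lemma tautAndIntro (a b : Formula P) : Tautology (imp a (imp b (Formula.and a b))) := by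
  intro v hn ha; simp only [imp, hn, ha]; cases v a <;> cases v b <;> rfl

lemma tautOrElim (a b : Formula P) : Tautology (imp (Formula.or a b) (imp (neg a) b)) := by
  intro v hn ha; simp only [imp, Formula.or, hn, ha]; cases v a <;> cases v b <;> rfl

lemma tautNegIntro (a b : Formula P) :
    Tautology (imp (imp a b) (imp (imp a (neg b)) (neg a))) := by
  intro v hn ha; simp only [imp, hn, ha]; cases v a <;> cases v b <;> rfl

lemma tautContra (a b c : Formula P) :
    Tautology (imp (imp (neg b) (imp a c)) (imp (imp (neg b) (imp a (neg c))) (imp a b))) := by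
  intro v hn ha; simp only [imp, hn, ha]; cases v a <;> cases v b <;> cases v c <;> rfl

lemma tautOrIffRight (a b : Formula P) :
    Tautology (imp (imp a b) (iffF (Formula.or a b) b)) := by
  intro v hn ha; simp only [imp, Formula.or, iffF, hn, ha]; cases v a <;> cases v b <;> rfl

lemma tautOrIdem (a : Formula P) : Tautology (iffF (Formula.or a a) a) := by
  intro v hn ha; simp only [imp, Formula.or, iffF, hn, ha]; cases v a <;> rfl

lemma tautDistrib (a b c : Formula P) :
    Tautology (iffF (Formula.and (Formula.or a c) (Formula.or b c))
      (Formula.or (Formula.and a b) c)) := by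
  intro v hn ha; simp only [imp, Formula.or, iffF, hn, ha]
  cases v a <;> cases v b <;> cases v c <;> rfl

lemma tautTopOr [Nonempty P] (b : Formula P) :
    Tautology (iffF (Formula.or (Formula.top P) b) (Formula.top P)) := by
  intro v hn ha; simp only [imp, Formula.or, iffF, Formula.top, hn, ha]
  cases v (atom (Classical.arbitrary P)) <;> cases v b <;> rfl

end CLProof
namespace CLProof

open Formula

variable {P : Type} {Ax : Set (Formula P)}

/-! ### Basic derivability facts -/

lemma derivFrom_mono {Γ Γ' : Set (Formula P)} (h : Γ ⊆ Γ') {φ : Formula P}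
    (d : DerivFrom Ax Γ φ) : DerivFrom Ax Γ' φ := by
  induction d with
  | mem h' => exact .mem (h h')
  | thm h' => exact .thm h'
  | mp _ _ ih1 ih2 => exact .mp ih1 ih2

/-- The deduction theorem. -/
lemma deduction {Γ : Set (Formula P)} {ψ φ : Formula P}
    (d : DerivFrom Ax (insert ψ Γ) φ) : DerivFrom Ax Γ (imp ψ φ) := by
  induction d with
  | @mem χ h =>
    rcases h with h | h
    · subst h; exact .thm (.taut (tautId _))
    · exact .mp (.thm (.taut (tautK _ _))) (.mem h)
  | thm h => exact .mp (.thm (.taut (tautK _ _))) (.thm h)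
  | mp _ _ ih1 ih2 => exact .mp (.mp (.thm (.taut (tautS _ _ _))) ih1) ih2

lemma derivFrom_empty {φ : Formula P} (d : DerivFrom Ax (∅ : Set (Formula P)) φ) :
    Deriv Ax φ := by
  induction d with
  | mem h => exact absurd h (Set.notMem_empty _)
  | thm h => exact h
  | mp _ _ ih1 ih2 => exact .mp ih1 ih2

/-- Compactness: any derivation uses only finitely many premises. -/
lemma derivFrom_finite {Γ : Set (Formula P)} {φ : Formula P} (d : DerivFrom Ax Γ φ) :
    ∃ L : List (Formula P), (∀ ψ ∈ L, ψ ∈ Γ) ∧ DerivFrom Ax {χ | χ ∈ L} φ := by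
  induction d with
  | @mem χ h => exact ⟨[χ], by simp [h], .mem (by simp)⟩
  | @thm χ h => exact ⟨[], by simp, .thm h⟩
  | mp _ _ ih1 ih2 =>
    obtain ⟨L1, hL1, d1⟩ := ih1
    obtain ⟨L2, hL2, d2⟩ := ih2
    refine ⟨L1 ++ L2, ?_, .mp (derivFrom_mono ?_ d1) (derivFrom_mono ?_ d2)⟩
    · intro ψ hψ; rcases List.mem_append.1 hψ with h | h
      · exact hL1 _ h
      · exact hL2 _ h
    · intro χ hχ; exact Set.mem_setOf.2 (List.mem_append.2 (Or.inl hχ))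
    · intro χ hχ; exact Set.mem_setOf.2 (List.mem_append.2 (Or.inr hχ))

/-! ### Maximal consistent sets -/

def MCS (Ax s : Set (Formula P)) : Prop :=
  Consistent Ax s ∧ ∀ φ, φ ∉ s → ¬ Consistent Ax (insert φ s)

lemma mcs_closed {s : Set (Formula P)} (hs : MCS Ax s) {φ : Formula P}
    (d : DerivFrom Ax s φ) : φ ∈ s := by
  by_contra hφ
  obtain ⟨χ, d1, d2⟩ := not_not.1 (hs.2 φ hφ)
  exact hs.1 ⟨χ, .mp (deduction d1) d, .mp (deduction d2) d⟩

lemma mcs_thm {s : Set (Formula P)} (hs : MCS Ax s) {φ : Formula P}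
    (d : Deriv Ax φ) : φ ∈ s := mcs_closed hs (.thm d)

lemma mcs_mp {s : Set (Formula P)} (hs : MCS Ax s) {φ ψ : Formula P}
    (h1 : imp φ ψ ∈ s) (h2 : φ ∈ s) : ψ ∈ s :=
  mcs_closed hs (.mp (.mem h1) (.mem h2))

lemma mcs_neg_iff {s : Set (Formula P)} (hs : MCS Ax s) {φ : Formula P} :
    neg φ ∈ s ↔ φ ∉ s := by
  constructor
  · intro h1 h2; exact hs.1 ⟨φ, .mem h2, .mem h1⟩
  · intro hφ
    obtain ⟨χ, d1, d2⟩ := not_not.1 (hs.2 φ hφ)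
    exact mcs_closed hs
      (.mp (.mp (.thm (.taut (tautNegIntro _ _))) (deduction d1)) (deduction d2))

lemma mcs_and_iff {s : Set (Formula P)} (hs : MCS Ax s) {φ ψ : Formula P} :
    Formula.and φ ψ ∈ s ↔ φ ∈ s ∧ ψ ∈ s := by
  constructor
  · intro h
    exact ⟨mcs_mp hs (mcs_thm hs (.taut (tautAndElim1 _ _))) h,
           mcs_mp hs (mcs_thm hs (.taut (tautAndElim2 _ _))) h⟩
  · rintro ⟨h1, h2⟩
    exact mcs_mp hs (mcs_mp hs (mcs_thm hs (.taut (tautAndIntro _ _))) h1) h2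

lemma mcs_or_elim {s : Set (Formula P)} (hs : MCS Ax s) {φ ψ : Formula P}
    (h : Formula.or φ ψ ∈ s) (hφ : φ ∉ s) : ψ ∈ s :=
  mcs_mp hs (mcs_mp hs (mcs_thm hs (.taut (tautOrElim _ _))) h) ((mcs_neg_iff hs).2 hφ)

lemma deriv_iff_left {φ ψ : Formula P} (h : Deriv Ax (iffF φ ψ)) : Deriv Ax (imp φ ψ) :=
  .mp (.taut (tautAndElim1 _ _)) h

lemma deriv_iff_right {φ ψ : Formula P} (h : Deriv Ax (iffF φ ψ)) : Deriv Ax (imp ψ φ) :=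
  .mp (.taut (tautAndElim2 _ _)) h

lemma mcs_iff {s : Set (Formula P)} (hs : MCS Ax s) {φ ψ : Formula P}
    (h : Deriv Ax (iffF φ ψ)) : (φ ∈ s ↔ ψ ∈ s) :=
  ⟨fun h1 => mcs_mp hs (mcs_thm hs (deriv_iff_left h)) h1,
   fun h1 => mcs_mp hs (mcs_thm hs (deriv_iff_right h)) h1⟩

/-! ### Lindenbaum -/

lemma lindenbaum {Γ : Set (Formula P)} (h : Consistent Ax Γ) :
    ∃ s, Γ ⊆ s ∧ MCS Ax s := by
  have hzorn : ∀ c ⊆ {Δ | Consistent Ax Δ}, IsChain (· ⊆ ·) c → c.Nonempty →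
      ∃ ub ∈ {Δ | Consistent Ax Δ}, ∀ s ∈ c, s ⊆ ub := by
    intro c hc hchain hne
    refine ⟨⋃₀ c, ?_, fun s hs => Set.subset_sUnion_of_mem hs⟩
    rintro ⟨χ, d1, d2⟩
    obtain ⟨L1, hL1, e1⟩ := derivFrom_finite d1
    obtain ⟨L2, hL2, e2⟩ := derivFrom_finite d2
    have key : ∀ L : List (Formula P), (∀ ψ ∈ L, ψ ∈ ⋃₀ c) → ∃ U ∈ c, ∀ ψ ∈ L, ψ ∈ U := by
      intro L
      induction L with
      | nil => intro _; exact ⟨hne.choose, hne.choose_spec, by simp⟩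
      | cons a L ih =>
        intro hmem
        obtain ⟨U, hU, hLU⟩ := ih (fun ψ hψ => hmem ψ (List.mem_cons_of_mem _ hψ))
        obtain ⟨V, hV, haV⟩ := hmem a List.mem_cons_self
        rcases hchain.total hU hV with hUV | hVU
        · refine ⟨V, hV, ?_⟩
          intro ψ hψ
          rcases List.mem_cons.1 hψ with rfl | hψ
          · exact haV
          · exact hUV (hLU _ hψ)
        · refine ⟨U, hU, ?_⟩
          intro ψ hψ
          rcases List.mem_cons.1 hψ with rfl | hψ
          · exact hVU haV
          · exact hLU _ hψ
    obtain ⟨U, hUc, hU⟩ := key (L1 ++ L2) (by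
      intro ψ hψ; rcases List.mem_append.1 hψ with h' | h'
      · exact hL1 _ h'
      · exact hL2 _ h')
    refine hc hUc ⟨χ, derivFrom_mono ?_ e1, derivFrom_mono ?_ e2⟩
    · intro ψ hψ; exact hU ψ (List.mem_append.2 (Or.inl hψ))
    · intro ψ hψ; exact hU ψ (List.mem_append.2 (Or.inr hψ))
  obtain ⟨m, hΓm, hm⟩ := zorn_subset_nonempty {Δ | Consistent Ax Δ} hzorn Γ h
  refine ⟨m, hΓm, hm.1, ?_⟩
  intro φ hφ hcon
  exact hφ ((hm.2 hcon (Set.subset_insert _ _)) (Set.mem_insert _ _))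

/-- If the canonical proof set of ψ is included in that of φ, then ψ → φ is derivable. -/
lemma proofset_imp {ψ φ : Formula P}
    (h : ∀ s : Set (Formula P), MCS Ax s → ψ ∈ s → φ ∈ s) : Deriv Ax (imp ψ φ) := by
  by_contra hnd
  have hcon : Consistent Ax ({ψ, neg φ} : Set (Formula P)) := by
    rintro ⟨χ, d1, d2⟩
    have e1 : DerivFrom Ax {neg φ} (imp ψ χ) := deduction d1
    have e2 : DerivFrom Ax {neg φ} (imp ψ (neg χ)) := deduction d2
    have f1 : Deriv Ax (imp (neg φ) (imp ψ χ)) := by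
      refine derivFrom_empty (deduction (derivFrom_mono ?_ e1))
      intro x hx; simp_all
    have f2 : Deriv Ax (imp (neg φ) (imp ψ (neg χ))) := by
      refine derivFrom_empty (deduction (derivFrom_mono ?_ e2))
      intro x hx; simp_all
    exact hnd (.mp (.mp (.taut (tautContra _ _ _)) f1) f2)
  obtain ⟨s, hsub, hs⟩ := lindenbaum hcon
  have h1 : ψ ∈ s := hsub (by simp)
  have h2 : neg φ ∈ s := hsub (by simp)
  exact (mcs_neg_iff hs).1 h2 (h s hs h1)

end CLProof
namespace CLProof

open Formula

variable {P : Type}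

/-- Canonical states: maximal consistent sets. -/
def CanS (Ax : Set (Formula P)) : Type := {s : Set (Formula P) // MCS Ax s}

/-- The set Λ(s) = {φ : Δφ ∈ s and Δ(φ ∨ ψ) ∈ s for all ψ}. -/
def Lam (s : Set (Formula P)) : Set (Formula P) :=
  {φ | delta φ ∈ s ∧ ∀ ψ, delta (Formula.or φ ψ) ∈ s}

/-- Canonical neighborhood function (supplementation of the proof sets of Λ). -/
def CanN (Ax : Set (Formula P)) (s : CanS Ax) : Set (Set (CanS Ax)) :=
  {X | ∃ φ ∈ Lam s.val, {t : CanS Ax | φ ∈ t.val} ⊆ X}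

/-- Canonical model. -/
def CanM (Ax : Set (Formula P)) (hne : Nonempty (CanS Ax)) : NbhdModel P :=
  ⟨CanS Ax, hne, CanN Ax, fun p => {t | atom p ∈ t.val}⟩

variable {Ax : Set (Formula P)}

lemma mem_lam_delta {s : Set (Formula P)} {φ : Formula P} (h : φ ∈ Lam s) :
    delta φ ∈ s := h.1

/-- The truth lemma. -/
lemma truth_lemma (hM : AxDeltaM ⊆ Ax) (hne : Nonempty (CanS Ax)) (φ : Formula P) :
    ∀ t : CanS Ax, (t ∈ (CanM Ax hne).truthSet φ ↔ φ ∈ t.val) := by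
  induction φ with
  | atom p => intro t; exact Iff.rfl
  | neg φ ih =>
    intro t
    have : t ∈ (CanM Ax hne).truthSet (neg φ) ↔ φ ∉ t.val := not_congr (ih t)
    rw [this, mcs_neg_iff t.2]
  | and φ ψ ih1 ih2 =>
    intro t
    have : t ∈ (CanM Ax hne).truthSet (Formula.and φ ψ) ↔ φ ∈ t.val ∧ ψ ∈ t.val :=
      and_congr (ih1 t) (ih2 t)
    rw [this, mcs_and_iff t.2]
  | delta φ ih =>
    have hset : (CanM Ax hne).truthSet φ = {t : CanS Ax | φ ∈ t.val} := Set.ext ih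
    have hsetc : ({t : CanS Ax | φ ∈ t.val})ᶜ = {t : CanS Ax | neg φ ∈ t.val} := by
      ext t; exact (mcs_neg_iff t.2).symm
    intro t
    show ((CanM Ax hne).truthSet φ ∈ CanN Ax t ∨ ((CanM Ax hne).truthSet φ)ᶜ ∈ CanN Ax t)
        ↔ delta φ ∈ t.val
    rw [hset]
    change {t : CanS Ax | φ ∈ t.val} ∈ CanN Ax t ∨ ({t : CanS Ax | φ ∈ t.val})ᶜ ∈ CanN Ax t ↔ _
    rw [hsetc]
    constructor
    · rintro (⟨ψ, hψ, hsub⟩ | ⟨ψ, hψ, hsub⟩)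
      · have himp : Deriv Ax (imp ψ φ) :=
          proofset_imp (fun s hs h1 => hsub (show (⟨s, hs⟩ : CanS Ax) ∈ _ from h1))
        have hiff : Deriv Ax (iffF (Formula.or ψ φ) φ) :=
          .mp (.taut (tautOrIffRight _ _)) himp
        exact (mcs_iff t.2 (.re hiff)).1 (hψ.2 φ)
      · have himp : Deriv Ax (imp ψ (neg φ)) :=
          proofset_imp (fun s hs h1 => hsub (show (⟨s, hs⟩ : CanS Ax) ∈ _ from h1))
        have hiff : Deriv Ax (iffF (Formula.or ψ (neg φ)) (neg φ)) :=
          .mp (.taut (tautOrIffRight _ _)) himp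
        have hδn : delta (neg φ) ∈ t.val := (mcs_iff t.2 (.re hiff)).1 (hψ.2 (neg φ))
        exact (mcs_iff t.2 (.equ φ)).2 hδn
    · intro hδ
      by_cases hall : ∀ ψ, delta (Formula.or φ ψ) ∈ t.val
      · exact Or.inl ⟨φ, ⟨hδ, hall⟩, subset_rfl⟩
      · push_neg at hall
        obtain ⟨ψ0, hψ0⟩ := hall
        have hall' : ∀ χ, delta (Formula.or (neg φ) χ) ∈ t.val := by
          intro χ
          have hax : imp (delta φ)
              (Formula.or (delta (Formula.or φ ψ0)) (delta (Formula.or (neg φ) χ))) ∈ Ax :=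
            hM ⟨φ, ψ0, χ, rfl⟩
          have hor := mcs_mp t.2 (mcs_thm t.2 (.ax hax)) hδ
          exact mcs_or_elim t.2 hor hψ0
        have hδn : delta (neg φ) ∈ t.val :=
          (mcs_iff t.2 (.re (.taut (tautOrIdem (neg φ))))).1 (hall' (neg φ))
        exact Or.inr ⟨neg φ, ⟨hδn, hall'⟩, subset_rfl⟩

end CLProof
namespace CLProof

open Formula

variable {P : Type} {Ax : Set (Formula P)}

lemma canN_superset_closed (hne : Nonempty (CanS Ax)) :
    SupersetClosed (CanM Ax hne).N := by
  rintro s X Y ⟨φ, hφ, hsub⟩ hXY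
  exact ⟨φ, hφ, hsub.trans hXY⟩

lemma top_mem_lam [Nonempty P] (hN : AxDeltaN P ⊆ Ax) {s : Set (Formula P)}
    (hs : MCS Ax s) : Formula.top P ∈ Lam s := by
  have hδ : delta (Formula.top P) ∈ s := mcs_thm hs (.ax (hN rfl))
  refine ⟨hδ, fun ψ => ?_⟩
  exact (mcs_iff hs (.re (.taut (tautTopOr ψ)))).2 hδ

lemma canN_contains_unit [Nonempty P] (hN : AxDeltaN P ⊆ Ax) (hne : Nonempty (CanS Ax)) :
    ContainsUnit (CanM Ax hne).N := by
  intro s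
  exact ⟨Formula.top P, top_mem_lam hN s.2, Set.subset_univ _⟩

lemma lam_and_closed (hC : AxDeltaC ⊆ Ax) {s : Set (Formula P)} (hs : MCS Ax s)
    {φ ψ : Formula P} (h1 : φ ∈ Lam s) (h2 : ψ ∈ Lam s) : Formula.and φ ψ ∈ Lam s := by
  have hΔC : ∀ a b : Formula P, delta a ∈ s → delta b ∈ s → delta (Formula.and a b) ∈ s := by
    intro a b ha hb
    have hax : imp (Formula.and (delta a) (delta b)) (delta (Formula.and a b)) ∈ Ax :=
      hC ⟨a, b, rfl⟩
    exact mcs_mp hs (mcs_thm hs (.ax hax)) ((mcs_and_iff hs).2 ⟨ha, hb⟩)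
  refine ⟨hΔC _ _ h1.1 h2.1, fun ρ => ?_⟩
  have h3 : delta (Formula.and (Formula.or φ ρ) (Formula.or ψ ρ)) ∈ s :=
    hΔC _ _ (h1.2 ρ) (h2.2 ρ)
  exact (mcs_iff hs (.re (.taut (tautDistrib φ ψ ρ)))).1 h3

lemma canN_inter_closed (hC : AxDeltaC ⊆ Ax) (hne : Nonempty (CanS Ax)) :
    InterClosed (CanM Ax hne).N := by
  rintro s X Y ⟨φ, hφ, hsubX⟩ ⟨ψ, hψ, hsubY⟩
  refine ⟨Formula.and φ ψ, lam_and_closed hC s.2 hφ hψ, ?_⟩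
  intro t ht
  have := (mcs_and_iff t.2).1 ht
  exact ⟨hsubX this.1, hsubY this.2⟩

/-- Main completeness lemma, shared between the two systems. -/
lemma main_lemma [Nonempty P] (hM : AxDeltaM ⊆ Ax) (hN : AxDeltaN P ⊆ Ax)
    (Γ : Set (Formula P)) (hΓ : Consistent Ax Γ) :
    ∃ (M : NbhdModel P) (s : M.S), SupersetClosed M.N ∧ ContainsUnit M.N ∧
      (AxDeltaC ⊆ Ax → InterClosed M.N) ∧ ∀ φ ∈ Γ, M.sat s φ := by
  obtain ⟨s0, hΓs0, hs0⟩ := lindenbaum hΓ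
  have hne : Nonempty (CanS Ax) := ⟨⟨s0, hs0⟩⟩
  refine ⟨CanM Ax hne, ⟨s0, hs0⟩, canN_superset_closed hne, canN_contains_unit hN hne,
    fun hC => canN_inter_closed hC hne, ?_⟩
  intro φ hφ
  exact (truth_lemma hM hne φ ⟨s0, hs0⟩).2 (hΓs0 hφ)

end CLProof
/-- the minimal contingency logic K^Δ = E^Δ + ΔM + ΔC + ΔN is strongly
complete with respect to the class of filters, i.e. (mcn)-frames; likewise
EMN^Δ = E^Δ + ΔM + ΔN is strongly complete with respect to the class of (mn)-frames. -/
theorem K_and_EMN_strongly_complete {P : Type} [Nonempty P] :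
    (∀ Γ : Set (Formula P), Consistent (AxDeltaM ∪ AxDeltaC ∪ AxDeltaN P) Γ →
      ∃ (M : NbhdModel P) (s : M.S),
        SupersetClosed M.N ∧ InterClosed M.N ∧ ContainsUnit M.N ∧ ∀ φ ∈ Γ, M.sat s φ) ∧
    (∀ Γ : Set (Formula P), Consistent (AxDeltaM ∪ AxDeltaN P) Γ →
      ∃ (M : NbhdModel P) (s : M.S),
        SupersetClosed M.N ∧ ContainsUnit M.N ∧ ∀ φ ∈ Γ, M.sat s φ) := by
  constructor
  · intro Γ hΓ
    obtain ⟨M, s, h1, h2, h3, h4⟩ := CLProof.main_lemma (Ax := AxDeltaM ∪ AxDeltaC ∪ AxDeltaN P)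
      (fun x hx => Or.inl (Or.inl hx)) (fun x hx => Or.inr hx) Γ hΓ
    exact ⟨M, s, h1, h3 (fun x hx => Or.inl (Or.inr hx)), h2, h4⟩
  · intro Γ hΓ
    obtain ⟨M, s, h1, h2, _, h4⟩ := CLProof.main_lemma (Ax := AxDeltaM ∪ AxDeltaN P)
      (fun x hx => Or.inl hx) (fun x hx => Or.inr hx) Γ hΓ
    exact ⟨M, s, h1, h2, h4⟩
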